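/- With κ the hexagonal morphism and K_t = π(κ^t(1̄)), for every i with 0 ≤ i < 3^{t-1} - 1, the middle terms of consecutive κ-blocks differ: K_t(3i+2) ≠ K_t(3(i+1)+2). Moreover, the middle term of the block π(κ(x)) equals π(x) + 1 (mod 3, with values in {1,2,3}). -/

import Mathlib

/-- The hexagonal morphism `κ` on the auxiliary alphabet `{1̄,1̲,2̄,2̲,3̄,3̲}`,
encoded as `Fin 6` via `0=1̄, 1=1̲, 2=2̄, 3=2̲, 4=3̄, 5=3̲`:
`κ(1̄)=1̄2̲3̄, κ(2̄)=2̄3̲1̄, κ(3̄)=3̄1̲2̄, κ(1̲)=3̲2̄1̲, κ(2̲)=1̲3̄2̲, κ(3̲)=2̲1̄3̲`. -/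
def hexKappa : Fin 6 → List (Fin 6) :=
  ![[0, 3, 4], [5, 2, 1], [2, 5, 0], [1, 4, 3], [4, 1, 2], [3, 0, 5]]

/-- The projection `π` sending both `ā` and `a̲` to `a`, with `{1,2,3}` encoded as `Fin 3`
via `0=1, 1=2, 2=3`. -/
def hexPi : Fin 6 → Fin 3 := ![0, 0, 1, 1, 2, 2]

/-- The `t`-fold iterate `κ^t(1̄)` as a word over the auxiliary alphabet. -/
def hexIter : ℕ → List (Fin 6)
  | 0 => [0]
  | t + 1 => (hexIter t).flatMap hexKappa

/-- The sequence `K_t = π(κ^t(1̄))`. -/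
def hexK (t : ℕ) : List (Fin 3) := (hexIter t).map hexPi

def hexR (x y : Fin 6) : Prop :=
  (x, y) ∈ [((0:Fin 6),(3:Fin 6)), (3,4), (5,2), (2,1), (2,5), (5,0),
    (1,4), (4,3), (4,1), (1,2), (3,0), (0,5)]

instance : DecidableRel hexR := fun x y =>
  inferInstanceAs (Decidable ((x, y) ∈ [((0:Fin 6),(3:Fin 6)), (3,4), (5,2), (2,1), (2,5), (5,0),
    (1,4), (4,3), (4,1), (1,2), (3,0), (0,5)]))

lemma kappa_len (x : Fin 6) : (hexKappa x).length = 3 := by fin_cases x <;> rfl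

lemma kappa_ne_nil (x : Fin 6) : hexKappa x ≠ [] := by fin_cases x <;> decide

lemma flatMap_len (l : List (Fin 6)) : (l.flatMap hexKappa).length = 3 * l.length := by
  induction l with
  | nil => rfl
  | cons a l ih => simp [List.flatMap_cons, kappa_len, ih]; ring

lemma iter_len (t : ℕ) : (hexIter t).length = 3 ^ t := by
  induction t with
  | zero => rfl
  | succ t ih => rw [hexIter, flatMap_len, ih, pow_succ]; ring

lemma chain3 {a b c : Fin 6} (h1 : hexR a b) (h2 : hexR b c) :
    List.Chain' hexR [a, b, c] := by
  unfold List.Chain'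
  rw [List.isChain_cons_cons, List.isChain_cons_cons]
  exact ⟨h1, h2, List.isChain_singleton _⟩

lemma boundary : ∀ a b : Fin 6, hexR a b →
    hexR ((hexKappa a).getLastD 0) ((hexKappa b).headD 0) := by decide

lemma chain_flatMap (l : List (Fin 6)) (h : List.Chain' hexR l) :
    List.Chain' hexR (l.flatMap hexKappa) := by
  unfold List.Chain' at h ⊢
  induction l with
  | nil => simp
  | cons a l ih =>
    rw [List.flatMap_cons, List.isChain_append]
    refine ⟨by fin_cases a <;> exact chain3 (by decide) (by decide), ih h.tail, ?_⟩
    intro x hx y hy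
    cases l with
    | nil => simp at hy
    | cons b l =>
      have hab : hexR a b := List.isChain_cons.mp h |>.1 b rfl
      have hy' : y = (hexKappa b).headD 0 := by
        rw [List.flatMap_cons] at hy
        rw [List.head?_append_of_ne_nil _ (kappa_ne_nil b)] at hy
        cases hb : hexKappa b with
        | nil => exact absurd hb (kappa_ne_nil b)
        | cons c cs => rw [hb] at hy; simp at hy; simp [hb, hy]
      have hx' : x = (hexKappa a).getLastD 0 := by
        cases ha : hexKappa a with
        | nil => exact absurd ha (kappa_ne_nil a)
        | cons c cs =>
          rw [ha] at hx
          rw [List.getLast?_eq_getLast (List.cons_ne_nil _ _)] at hx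
          simp only [Option.mem_some_iff] at hx
          rw [List.getLastD_eq_getLast?, List.getLast?_eq_getLast (List.cons_ne_nil _ _)]
          simp [hx]
      subst hx' hy'
      exact boundary a b hab
  
lemma chain_iter (t : ℕ) : List.Chain' hexR (hexIter t) := by
  induction t with
  | zero => simp [hexIter, List.Chain']
  | succ t ih => exact chain_flatMap _ ih

lemma pi_ne {x y : Fin 6} (h : hexR x y) : hexPi x ≠ hexPi y := by
  revert h; revert x y; decide

lemma fm_getD (l : List (Fin 6)) (i j : ℕ) (hi : i < l.length) (hj : j < 3) (d : Fin 6) :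
    (l.flatMap hexKappa).getD (3 * i + j) d = (hexKappa (l.getD i 0)).getD j d := by
  induction l generalizing i with
  | nil => simp at hi
  | cons a l ih =>
    cases i with
    | zero =>
      rw [List.flatMap_cons]
      simp only [Nat.mul_zero, Nat.zero_add]
      rw [List.getD_append _ _ _ _ (by rw [kappa_len]; exact hj)]
      rfl
    | succ i =>
      rw [List.flatMap_cons]
      have h3 : 3 * (i + 1) + j = (3 * i + j) + (hexKappa a).length := by
        rw [kappa_len]; ring
      rw [h3, List.getD_append_right _ _ _ _ (Nat.le_add_left _ _)]
      simp only [Nat.add_sub_cancel]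
      rw [ih i (by simpa using hi)]
      rfl

/-- Middle terms of consecutive `κ`-blocks of `K_t` differ, and the middle term of
`π(κ(x))` equals `π(x) + 1` (mod 3, in the cyclic order of `{1,2,3}` encoded as `Fin 3`). -/
theorem hexK_middle (t : ℕ) :
    (∀ i < 3 ^ (t - 1) - 1,
        (hexK t).getD (3 * i + 1) 0 ≠ (hexK t).getD (3 * (i + 1) + 1) 0) ∧
      ∀ x : Fin 6, ((hexKappa x).map hexPi).getD 1 0 = hexPi x + 1 := by
  constructor
  · cases t with
    | zero => intro i hi; simp at hi
    | succ s =>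
      intro i hi
      simp only [Nat.succ_sub_one] at hi
      have hi1 : i + 1 < (hexIter s).length := by
        rw [iter_len]; omega
      have hi0 : i < (hexIter s).length := by omega
      have key : ∀ k (hk : k < (hexIter s).length),
          (hexK (s+1)).getD (3 * k + 1) 0 = hexPi ((hexKappa ((hexIter s).getD k 0)).getD 1 0) := by
        intro k hk
        have hlen : 3 * k + 1 < (hexK (s+1)).length := by
          simp only [hexK, List.length_map, iter_len]
          have h3 : (3:ℕ)^(s+1) = 3 * 3^s := by ring
          rw [iter_len] at hk; omega
        simp only [hexK] at hlen ⊢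
        rw [List.getD_eq_getElem _ _ hlen, List.getElem_map]
        have : (hexIter (s+1))[3*k+1]'(by simpa using hlen) = (hexKappa ((hexIter s).getD k 0)).getD 1 0 := by
          have h4 := fm_getD (hexIter s) k 1 hk (by omega) 0
          rw [← h4]
          exact (List.getD_eq_getElem ((hexIter s).flatMap hexKappa) 0
            (by rw [flatMap_len]; omega)).symm
        rw [this]
      rw [key i hi0, key (i+1) hi1]
      have mid : ∀ x : Fin 6, hexPi ((hexKappa x).getD 1 0) = hexPi x + 1 := by decide
      rw [mid, mid]
      have hR : hexR ((hexIter s).getD i 0) ((hexIter s).getD (i+1) 0) := by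
        have hc := chain_iter s
        unfold List.Chain' at hc
        rw [List.isChain_iff_getElem] at hc
        have h2 := hc i (by omega)
        rwa [List.getD_eq_getElem _ _ hi0, List.getD_eq_getElem _ _ hi1]
      exact fun h => pi_ne hR (add_right_cancel h)
  · decide
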